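/- If X has the Hurewicz property and the selective screenability property S_c(𝒪,𝒪), then for each sequence (𝒰_n : n < ∞) of ω-covers of X there is a sequence (𝒱_n : n < ∞) such that: each 𝒱_n is a finite pairwise disjoint collection of open sets refining 𝒰_n; the families 𝒱_n are mutually disjoint (𝒱_m ∩ 𝒱_n = ∅ for m ≠ n); and there exist integers n_1 < n_2 < ⋯ such that every x ∈ X belongs to ⋃(⋃_{n_k ≤ j < n_{k+1}} 𝒱_j) for all but finitely many k. -/

import Mathlib

open Set Filter Topology TopologicalSpace

/-- `𝒰` is an open cover of the space `Z`. -/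
def IsOpenCover {Z : Type*} [TopologicalSpace Z] (𝒰 : Set (Set Z)) : Prop :=
  (∀ U ∈ 𝒰, IsOpen U) ∧ ⋃₀ 𝒰 = univ

/-- `𝒰` is an ω-cover: an open cover, not containing the whole space,
such that every finite subset of the space is contained in a member. -/
def IsOmegaCover {Z : Type*} [TopologicalSpace Z] (𝒰 : Set (Set Z)) : Prop :=
  IsOpenCover 𝒰 ∧ univ ∉ 𝒰 ∧ ∀ F : Set Z, F.Finite → ∃ U ∈ 𝒰, F ⊆ U

/-- The Menger property `S_fin(𝒪,𝒪)`. -/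
def Menger (Z : Type*) [TopologicalSpace Z] : Prop :=
  ∀ 𝒰 : ℕ → Set (Set Z), (∀ n, IsOpenCover (𝒰 n)) →
    ∃ 𝒱 : ℕ → Set (Set Z), (∀ n, (𝒱 n).Finite ∧ 𝒱 n ⊆ 𝒰 n) ∧ ⋃₀ (⋃ n, 𝒱 n) = univ

/-- The Rothberger property `S_1(𝒪,𝒪)`. -/
def Rothberger (Z : Type*) [TopologicalSpace Z] : Prop :=
  ∀ 𝒰 : ℕ → Set (Set Z), (∀ n, IsOpenCover (𝒰 n)) →
    ∃ U : ℕ → Set Z, (∀ n, U n ∈ 𝒰 n) ∧ (⋃ n, U n) = univ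

/-- Selective screenability `S_c(𝒪,𝒪)`. -/
def SelScreenable (Z : Type*) [TopologicalSpace Z] : Prop :=
  ∀ 𝒰 : ℕ → Set (Set Z), (∀ n, IsOpenCover (𝒰 n)) →
    ∃ 𝒱 : ℕ → Set (Set Z),
      (∀ n, (𝒱 n).PairwiseDisjoint id ∧ (∀ V ∈ 𝒱 n, IsOpen V) ∧
        (∀ V ∈ 𝒱 n, ∃ U ∈ 𝒰 n, V ⊆ U)) ∧
      ⋃₀ (⋃ n, 𝒱 n) = univ

/-- The Hurewicz property. -/
def Hurewicz (Z : Type*) [TopologicalSpace Z] : Prop :=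
  ∀ 𝒰 : ℕ → Set (Set Z), (∀ n, IsOpenCover (𝒰 n)) →
    ∃ 𝒱 : ℕ → Set (Set Z), (∀ n, (𝒱 n).Finite ∧ 𝒱 n ⊆ 𝒰 n) ∧
      ∀ z : Z, ∀ᶠ n in atTop, z ∈ ⋃₀ 𝒱 n

/-- `𝒰` is a γ-cover: an infinite family of open sets such that every point
lies in all but finitely many members. -/
def IsGammaCover {Z : Type*} [TopologicalSpace Z] (𝒰 : Set (Set Z)) : Prop :=
  𝒰.Infinite ∧ (∀ U ∈ 𝒰, IsOpen U) ∧ ∀ z : Z, {U ∈ 𝒰 | z ∉ U}.Finite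

/-- `S_1(Ω,Γ)`: from every sequence of ω-covers one can pick one member each
so that the selections form a γ-cover (the γ-set property). -/
def S1OmegaGamma (Z : Type*) [TopologicalSpace Z] : Prop :=
  ∀ 𝒰 : ℕ → Set (Set Z), (∀ n, IsOmegaCover (𝒰 n)) →
    ∃ U : ℕ → Set Z, (∀ n, U n ∈ 𝒰 n) ∧ IsGammaCover (range U)

/-- `S_1(Ω,𝒪^gp)`: from every sequence of ω-covers one can pick one member each
so that the selections form a groupable cover. -/
def S1OmegaGp (Z : Type*) [TopologicalSpace Z] : Prop :=
  ∀ 𝒰 : ℕ → Set (Set Z), (∀ n, IsOmegaCover (𝒰 n)) →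
    ∃ V : ℕ → Set Z, (∀ n, V n ∈ 𝒰 n) ∧
      ∃ f : ℕ → ℕ, StrictMono f ∧
        ∀ z : Z, ∀ᶠ k in atTop, ∃ j ∈ Set.Ico (f k) (f (k + 1)), z ∈ V j

/-- TWO has a winning strategy in the length-`α` game `G_1^α(𝒪,𝒪)` on `Z`:
a history-dependent selection rule whose picks are legal and cover `Z`
whenever ONE plays open covers. -/
def TwoWinsG1 (Z : Type*) [TopologicalSpace Z] (α : Ordinal.{0}) : Prop :=
  ∃ σ : (Ordinal.{0} → Set (Set Z)) → Ordinal.{0} → Set Z,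
    (∀ O O' : Ordinal.{0} → Set (Set Z), ∀ γ, (∀ β ≤ γ, O β = O' β) → σ O γ = σ O' γ) ∧
    ∀ O : Ordinal.{0} → Set (Set Z), (∀ γ, γ < α → IsOpenCover (O γ)) →
      (∀ γ, γ < α → σ O γ ∈ O γ) ∧ ∀ z : Z, ∃ γ, γ < α ∧ z ∈ σ O γ

/-- TWO has a winning strategy in the length-`α` game `G_fin^α(𝒪,𝒪)` on `Z`. -/
def TwoWinsGfin (Z : Type*) [TopologicalSpace Z] (α : Ordinal.{0}) : Prop :=
  ∃ σ : (Ordinal.{0} → Set (Set Z)) → Ordinal.{0} → Set (Set Z),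
    (∀ O O' : Ordinal.{0} → Set (Set Z), ∀ γ, (∀ β ≤ γ, O β = O' β) → σ O γ = σ O' γ) ∧
    ∀ O : Ordinal.{0} → Set (Set Z), (∀ γ, γ < α → IsOpenCover (O γ)) →
      (∀ γ, γ < α → (σ O γ).Finite ∧ σ O γ ⊆ O γ) ∧
      ∀ z : Z, ∃ γ, γ < α ∧ z ∈ ⋃₀ σ O γ

/-- A Lusin set: an uncountable set of reals meeting every nowhere dense set
in a countable set. -/
def IsLusin (L : Set ℝ) : Prop :=
  ¬ L.Countable ∧ ∀ N : Set ℝ, IsNowhereDense N → (L ∩ N).Countable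

/-- A Sierpiński set: an uncountable set of reals meeting every Lebesgue null
set in a countable set. -/
def IsSierpinski (S : Set ℝ) : Prop :=
  ¬ S.Countable ∧ ∀ N : Set ℝ, MeasureTheory.volume N = 0 → (S ∩ N).Countable

/-- In an ω-cover we can always find a member containing a given finite set and
avoiding a given finite family of sets. -/
lemma aux_omega_fresh {X : Type*} [TopologicalSpace X] {𝒰₀ : Set (Set X)}
    (h : IsOmegaCover 𝒰₀) {A : Set X} (hA : A.Finite)
    {P : Set (Set X)} (hP : P.Finite) : ∃ U ∈ 𝒰₀, A ⊆ U ∧ U ∉ P := by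
  classical
  set S : Set X → Set X := fun V => if h : ∃ z, z ∉ V then {h.choose} else ∅ with hS
  have hSfin : ∀ V, (S V).Finite := by
    intro V; by_cases h : ∃ z, z ∉ V <;> simp [hS, h]
  have hA' : (A ∪ ⋃ V ∈ P, S V).Finite := hA.union (hP.biUnion fun V _ => hSfin V)
  obtain ⟨U, hU, hsub⟩ := h.2.2 _ hA'
  refine ⟨U, hU, (subset_union_left).trans hsub, ?_⟩
  intro hUP
  have hUne : U ≠ univ := fun hh => h.2.1 (hh ▸ hU)
  have hex : ∃ z, z ∉ U := by
    by_contra hc; push_neg at hc; exact hUne (eq_univ_of_forall hc)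
  have hSU : S U = {hex.choose} := dif_pos hex
  have hz : hex.choose ∈ U := hsub (Or.inr (mem_biUnion hUP (by rw [hSU]; rfl)))
  exact hex.choose_spec hz

/-- Choice of deletion points: from each infinite member of a finite family we
can delete a point, avoiding a finite set of forbidden points, so that the
results avoid a given finite family and are pairwise distinct. -/
lemma aux_deletion {X : Type*} {P : Set (Set X)} (hP : P.Finite)
    {Q : Set X} (hQ : Q.Finite) [Nonempty X] :
    ∀ {F : Set (Set X)}, F.Finite → (∀ W ∈ F, W.Infinite) →
    ∃ c : Set X → X, (∀ W ∈ F, c W ∈ W ∧ c W ∉ Q ∧ W \ {c W} ∉ P) ∧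
      (∀ W ∈ F, ∀ W' ∈ F, W ≠ W' → W \ {c W} ≠ W' \ {c W'}) := by
  classical
  intro F hF
  refine Set.Finite.induction_on
    (motive := fun F _ => (∀ W ∈ F, W.Infinite) →
      ∃ c : Set X → X, (∀ W ∈ F, c W ∈ W ∧ c W ∉ Q ∧ W \ {c W} ∉ P) ∧
        (∀ W ∈ F, ∀ W' ∈ F, W ≠ W' → W \ {c W} ≠ W' \ {c W'})) F hF ?_ ?_
  · intro _
    exact ⟨fun _ => Classical.arbitrary X, by simp, by simp⟩
  ·   intro a s ha hs ih hinf
      obtain ⟨c', h1, h2⟩ := ih (fun W hW => hinf W (mem_insert_of_mem _ hW))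
      have hainf : a.Infinite := hinf a (mem_insert _ _)
      have hinj : InjOn (fun p => a \ {p}) a := by
        intro p hp p' hp' he
        by_contra hne
        have : p' ∈ a \ {p} := ⟨hp', by simpa using fun h => hne h.symm⟩
        have he2 : a \ {p} = a \ {p'} := he
        rw [he2] at this
        exact this.2 rfl
      have hbadP : (a ∩ {p | a \ {p} ∈ P}).Finite := by
        apply Set.Finite.of_finite_image (f := fun p => a \ {p})
        · exact hP.subset (by rintro _ ⟨p, ⟨_, hp⟩, rfl⟩; exact hp)
        · exact hinj.mono inter_subset_left
      have hbadR : (a ∩ {p | ∃ W ∈ s, a \ {p} = W \ {c' W}}).Finite := by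
        apply Set.Finite.of_finite_image (f := fun p => a \ {p})
        · refine ((hs.image (fun W => W \ {c' W})).subset ?_)
          rintro _ ⟨p, ⟨_, W, hW, he⟩, rfl⟩
          exact ⟨W, hW, he.symm⟩
        · exact hinj.mono inter_subset_left
      obtain ⟨p, hp⟩ := (hainf.diff ((hQ.union hbadP).union hbadR)).nonempty
      have hpa : p ∈ a := hp.1
      have hpQ : p ∉ Q := fun h => hp.2 (Or.inl (Or.inl h))
      have hpP : a \ {p} ∉ P := fun h => hp.2 (Or.inl (Or.inr ⟨hpa, h⟩))
      have hpR : ∀ W ∈ s, a \ {p} ≠ W \ {c' W} := fun W hW he => hp.2 (Or.inr ⟨hpa, W, hW, he⟩)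
      set c : Set X → X := fun W => if W = a then p else c' W with hc
      have hca : c a = p := if_pos rfl
      have hcs : ∀ W ∈ s, c W = c' W := by
        intro W hW
        have : W ≠ a := fun h => ha (h ▸ hW)
        simp [hc, this]
      refine ⟨c, ?_, ?_⟩
      · intro W hW
        rcases mem_insert_iff.mp hW with h | h
        · rw [h, hca]; exact ⟨hpa, hpQ, hpP⟩
        · rw [hcs W h]; exact h1 W h
      · intro W hW W' hW' hne
        rcases mem_insert_iff.mp hW with h | h <;> rcases mem_insert_iff.mp hW' with h' | h'
        · exact absurd (h.trans h'.symm) hne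
        · rw [h, hca, hcs W' h']; exact hpR W' h'
        · rw [h', hca, hcs W h]; exact fun hh => hpR W h hh.symm
        · rw [hcs W h, hcs W' h']; exact h2 W h W' h' hne

/-- If `X` has the Hurewicz property and `S_c(𝒪,𝒪)`, then every sequence of
ω-covers admits finite pairwise disjoint open refinements, mutually disjoint,
which can be grouped so that every point is in all but finitely many groups. -/
theorem sc_and_hurewicz_implies_grouped_refinements
    {X : Type*} [MetricSpace X] [SeparableSpace X]
    (hH : Hurewicz X) (hSc : SelScreenable X)
    (𝒰 : ℕ → Set (Set X)) (h𝒰 : ∀ n, IsOmegaCover (𝒰 n)) :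
    ∃ 𝒱 : ℕ → Set (Set X),
      (∀ n, (𝒱 n).Finite ∧ (𝒱 n).PairwiseDisjoint id ∧ (∀ V ∈ 𝒱 n, IsOpen V) ∧
        (∀ V ∈ 𝒱 n, ∃ U ∈ 𝒰 n, V ⊆ U)) ∧
      (∀ m n, m ≠ n → Disjoint (𝒱 m) (𝒱 n)) ∧
      (∃ f : ℕ → ℕ, StrictMono f ∧
        ∀ x : X, ∀ᶠ k in atTop, x ∈ ⋃ j ∈ Set.Ico (f k) (f (k + 1)), ⋃₀ 𝒱 j) := by
  classical
  rcases isEmpty_or_nonempty X with hX | hX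
  · exfalso
    obtain ⟨U, hU, -⟩ := (h𝒰 0).2.2 ∅ finite_empty
    have hUuniv : U = univ := eq_univ_of_forall fun x => (hX.false x).elim
    exact (h𝒰 0).2.1 (hUuniv ▸ hU)
  -- Step 0: finite intersections of the ω-covers
  set 𝒰S : ℕ → Set (Set X) := fun n =>
    {V | ∃ U : ℕ → Set X, (∀ i, i ≤ n → U i ∈ 𝒰 i) ∧ V = ⋂ i ∈ Finset.range (n+1), U i}
    with h𝒰Sdef
  have h𝒰Scov : ∀ n, IsOpenCover (𝒰S n) := by
    intro n
    constructor
    · rintro V ⟨U, hU, rfl⟩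
      exact isOpen_biInter_finset fun i hi =>
        (h𝒰 i).1.1 _ (hU i (Nat.lt_succ_iff.mp (Finset.mem_range.mp hi)))
    · apply eq_univ_of_forall
      intro x
      have hx : ∀ i : ℕ, ∃ u, u ∈ 𝒰 i ∧ x ∈ u := by
        intro i
        have h1 : x ∈ ⋃₀ 𝒰 i := by rw [(h𝒰 i).1.2]; trivial
        simpa [mem_sUnion] using h1
      choose U hU hxU using hx
      refine ⟨_, ⟨U, fun i _ => hU i, rfl⟩, ?_⟩
      simp only [mem_iInter]
      exact fun i _ => hxU i
  have h𝒰Sref : ∀ n, ∀ V ∈ 𝒰S n, ∀ j ≤ n, ∃ U ∈ 𝒰 j, V ⊆ U := by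
    rintro n V ⟨U, hU, rfl⟩ j hj
    exact ⟨U j, hU j hj, biInter_subset_of_mem (Finset.mem_range.mpr (Nat.lt_succ_of_le hj))⟩
  -- Step 1: selective screenability applied to each tail
  have hScAll : ∀ k : ℕ, ∃ 𝒲 : ℕ → Set (Set X),
      (∀ m, (𝒲 m).PairwiseDisjoint id ∧ (∀ V ∈ 𝒲 m, IsOpen V) ∧
        (∀ V ∈ 𝒲 m, ∃ U ∈ 𝒰S (k+m), V ⊆ U)) ∧ ⋃₀ (⋃ m, 𝒲 m) = univ :=
    fun k => hSc (fun m => 𝒰S (k+m)) (fun m => h𝒰Scov (k+m))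
  choose 𝒲 h𝒲p h𝒲cov using hScAll
  have h𝒲ref : ∀ k m, ∀ W ∈ 𝒲 k m, ∀ j ≤ k + m, ∃ U ∈ 𝒰 j, W ⊆ U := by
    intro k m W hW j hj
    obtain ⟨U', hU', hWU'⟩ := (h𝒲p k m).2.2 W hW
    obtain ⟨U, hU, hsub⟩ := h𝒰Sref _ U' hU' j hj
    exact ⟨U, hU, hWU'.trans hsub⟩
  -- Step 2: Hurewicz
  obtain ⟨𝒱H, h𝒱H1, h𝒱H2⟩ := hH (fun k => ⋃ m, 𝒲 k m) (by
    intro k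
    constructor
    · intro V hV
      obtain ⟨m, hm⟩ := mem_iUnion.mp hV
      exact (h𝒲p k m).2.1 V hm
    · exact h𝒲cov k)
  -- level function
  set lvl : ℕ → Set X → ℕ := fun k W => if h : ∃ m, W ∈ 𝒲 k m then h.choose else 0 with hlvldef
  have hlvlmem : ∀ k, ∀ W ∈ 𝒱H k, W ∈ 𝒲 k (lvl k W) := by
    intro k W hW
    have h : ∃ m, W ∈ 𝒲 k m := mem_iUnion.mp ((h𝒱H1 k).2 hW)
    simp only [hlvldef, dif_pos h]
    exact h.choose_spec
  set Infs : ℕ → Set (Set X) := fun k => {W ∈ 𝒱H k | W.Infinite} with hInfsdef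
  have hInfsub : ∀ k, Infs k ⊆ 𝒱H k := fun k => sep_subset _ _
  have hInfsFin : ∀ k, (Infs k).Finite := fun k => (h𝒱H1 k).1.subset (hInfsub k)
  set M : ℕ → ℕ := fun k => ((hInfsFin k).image (lvl k)).toFinset.sup id with hMdef
  have hlvl_le_M : ∀ k, ∀ W ∈ Infs k, lvl k W ≤ M k := by
    intro k W hW
    exact Finset.le_sup (f := id) (b := lvl k W)
      (by rw [Set.Finite.mem_toFinset]; exact mem_image_of_mem _ hW)
  -- block start function
  set f : ℕ → ℕ := fun r => Nat.rec 0 (fun _ fr => fr + M fr + 2) r with hfdef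
  have hf0 : f 0 = 0 := rfl
  have hfs : ∀ r, f (r + 1) = f r + M (f r) + 2 := fun r => rfl
  have hfmono : StrictMono f := strictMono_nat_of_lt_succ (fun r => by rw [hfs]; omega)
  have hfge : ∀ r, r ≤ f r := fun r => hfmono.le_apply
  -- Step 3: one stage of the construction
  have stage : ∀ (r : ℕ) (P : Set (Set X)), P.Finite → ∀ (Q : Set X), Q.Finite →
      ∃ (fam : ℕ → Set (Set X)) (D : Set X),
        D.Finite ∧
        (⋃ t, fam t).Finite ∧
        D ∩ Q = ∅ ∧
        (∀ t, (fam t).Finite) ∧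
        (∀ t, (fam t).PairwiseDisjoint id) ∧
        (∀ t, ∀ V ∈ fam t, IsOpen V) ∧
        (∀ t, ∀ V ∈ fam t, ∃ U ∈ 𝒰 (f r + t), V ⊆ U) ∧
        (∀ t t', t ≠ t' → Disjoint (fam t) (fam t')) ∧
        (∀ t, Disjoint (fam t) P) ∧
        (∀ x, x ∈ ⋃₀ 𝒱H (f r) → x ∉ D → ∃ t, t ≤ M (f r) + 1 ∧ x ∈ ⋃₀ fam t) := by
    intro r P hP Q hQ
    obtain ⟨c, hc1, hc2⟩ := aux_deletion hP hQ (hInfsFin (f r)) (fun W hW => hW.2)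
    set k := f r with hkdef
    have hFinsFin : ({W ∈ 𝒱H k | ¬ W.Infinite}).Finite := (h𝒱H1 k).1.subset (sep_subset _ _)
    have hFPfin : (⋃₀ {W ∈ 𝒱H k | ¬ W.Infinite}).Finite :=
      Set.Finite.sUnion hFinsFin (fun W hW => not_infinite.mp hW.2)
    set gfam : ℕ → Set (Set X) := fun t => (fun W => W \ {c W}) '' {W ∈ Infs k | lvl k W = t}
      with hgfamdef
    have hgfamsub : ∀ t, gfam t ⊆ (fun W => W \ {c W}) '' Infs k :=
      fun t => image_mono (sep_subset _ _)
    have hgAllfin : ((fun W => W \ {c W}) '' Infs k).Finite := (hInfsFin k).image _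
    obtain ⟨U₀, hU₀mem, hU₀sub, hU₀fresh⟩ :=
      aux_omega_fresh (h𝒰 (k + (M k + 1))) hFPfin (hP.union hgAllfin)
    set fam : ℕ → Set (Set X) := fun t =>
      if t ≤ M k then gfam t else if t = M k + 1 then {U₀} else ∅ with hfamdef
    refine ⟨fam, c '' Infs k, (hInfsFin k).image c, ?_, ?_, ?_, ?_, ?_, ?_, ?_, ?_, ?_⟩
    · refine (hgAllfin.union (finite_singleton U₀)).subset ?_
      intro V hV
      obtain ⟨t, ht⟩ := mem_iUnion.mp hV
      simp only [hfamdef] at ht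
      split_ifs at ht with h1 h2
      · exact Or.inl (hgfamsub t ht)
      · exact Or.inr ht
      · exact absurd ht (notMem_empty V)
    · apply eq_empty_iff_forall_notMem.mpr
      rintro x ⟨⟨W, hW, rfl⟩, hxQ⟩
      exact (hc1 W hW).2.1 hxQ
    · intro t
      simp only [hfamdef]
      split_ifs with h1 h2
      · exact hgAllfin.subset (hgfamsub t)
      · exact finite_singleton _
      · exact finite_empty
    · intro t
      simp only [hfamdef]
      split_ifs with h1 h2
      · rintro V₁ hV₁ V₂ hV₂ hne
        obtain ⟨W₁, hW₁, rfl⟩ := hV₁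
        obtain ⟨W₂, hW₂, rfl⟩ := hV₂
        have hWne : W₁ ≠ W₂ := fun h => hne (by rw [h])
        have m₁ : W₁ ∈ 𝒲 k t := by rw [← hW₁.2]; exact hlvlmem k W₁ hW₁.1.1
        have m₂ : W₂ ∈ 𝒲 k t := by rw [← hW₂.2]; exact hlvlmem k W₂ hW₂.1.1
        exact ((h𝒲p k t).1 m₁ m₂ hWne).mono diff_subset diff_subset
      · exact pairwiseDisjoint_singleton _ _
      · exact pairwiseDisjoint_empty
    · intro t V hV
      simp only [hfamdef] at hV
      split_ifs at hV with h1 h2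
      · obtain ⟨W, hW, rfl⟩ := hV
        exact ((h𝒲p k (lvl k W)).2.1 W (hlvlmem k W hW.1.1)).sdiff isClosed_singleton
      · rw [mem_singleton_iff.mp hV]; exact (h𝒰 _).1.1 _ hU₀mem
      · exact absurd hV (notMem_empty V)
    · intro t V hV
      simp only [hfamdef] at hV
      split_ifs at hV with h1 h2
      · obtain ⟨W, hW, rfl⟩ := hV
        have hm : W ∈ 𝒲 k t := by rw [← hW.2]; exact hlvlmem k W hW.1.1
        obtain ⟨U, hU, hsub⟩ := h𝒲ref k t W hm (k + t) le_rfl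
        exact ⟨U, hU, diff_subset.trans hsub⟩
      · rw [mem_singleton_iff.mp hV]
        rw [h2]
        exact ⟨U₀, hU₀mem, subset_rfl⟩
      · exact absurd hV (notMem_empty V)
    · intro t t' hne
      rw [Set.disjoint_left]
      intro V hV hV'
      simp only [hfamdef] at hV hV'
      split_ifs at hV hV' with h1 h2 h3 h4
      · obtain ⟨W₁, hW₁, he₁⟩ := hV
        obtain ⟨W₂, hW₂, he₂⟩ := hV'
        by_cases hWW : W₁ = W₂
        · exact hne (by rw [← hW₁.2, ← hW₂.2, hWW])
        · exact hc2 W₁ hW₁.1 W₂ hW₂.1 hWW (he₁.trans he₂.symm)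
      · rw [mem_singleton_iff.mp hV'] at hV
        exact hU₀fresh (Or.inr (hgfamsub t hV))
      · exact absurd hV' (notMem_empty V)
      · rw [mem_singleton_iff.mp hV] at hV'
        exact hU₀fresh (Or.inr (hgfamsub t' hV'))
      · exact hne (by omega)
      · exact absurd hV' (notMem_empty V)
      · exact absurd hV (notMem_empty V)
      · exact absurd hV (notMem_empty V)
      · exact absurd hV (notMem_empty V)
    · intro t
      rw [Set.disjoint_left]
      intro V hV hVP
      simp only [hfamdef] at hV
      split_ifs at hV with h1 h2
      · obtain ⟨W, hW, rfl⟩ := hV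
        exact (hc1 W hW.1).2.2 hVP
      · rw [mem_singleton_iff.mp hV] at hVP
        exact hU₀fresh (Or.inl hVP)
      · exact absurd hV (notMem_empty V)
    · intro x hx hxD
      obtain ⟨W, hW, hxW⟩ := hx
      by_cases hWinf : W.Infinite
      · have hWI : W ∈ Infs k := ⟨hW, hWinf⟩
        have hle := hlvl_le_M k W hWI
        refine ⟨lvl k W, by omega, ?_⟩
        refine ⟨W \ {c W}, ?_, ⟨hxW, ?_⟩⟩
        · simp only [hfamdef, if_pos hle]
          exact mem_image_of_mem _ ⟨hWI, rfl⟩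
        · intro hxc
          exact hxD ⟨W, hWI, (mem_singleton_iff.mp hxc).symm⟩
      · refine ⟨M k + 1, le_rfl, ?_⟩
        refine ⟨U₀, ?_, hU₀sub ⟨W, ⟨hW, hWinf⟩, hxW⟩⟩
        simp only [hfamdef]
        split_ifs with h1 h2
        all_goals first | omega | rfl
  -- Step 4: recursion over stages
  choose famF DF hstage using stage
  set state : ℕ → {pq : Set (Set X) × Set X // pq.1.Finite ∧ pq.2.Finite} := fun r =>
    Nat.rec ⟨(∅, ∅), finite_empty, finite_empty⟩
      (fun r st =>
        ⟨(st.1.1 ∪ ⋃ t, famF r st.1.1 st.2.1 st.1.2 st.2.2 t,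
          st.1.2 ∪ DF r st.1.1 st.2.1 st.1.2 st.2.2),
         st.2.1.union (hstage r st.1.1 st.2.1 st.1.2 st.2.2).2.1,
         st.2.2.union (hstage r st.1.1 st.2.1 st.1.2 st.2.2).1⟩) r
    with hstatedef
  set P : ℕ → Set (Set X) := fun r => (state r).1.1 with hPdef
  set Q : ℕ → Set X := fun r => (state r).1.2 with hQdef
  set fam : ℕ → ℕ → Set (Set X) :=
    fun r => famF r ((state r).1.1) ((state r).2.1) ((state r).1.2) ((state r).2.2) with hfam2
  set D : ℕ → Set X :=
    fun r => DF r ((state r).1.1) ((state r).2.1) ((state r).1.2) ((state r).2.2) with hD2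
  have hstg := fun r => hstage r ((state r).1.1) ((state r).2.1) ((state r).1.2) ((state r).2.2)
  have hPsucc : ∀ r, P (r+1) = P r ∪ ⋃ t, fam r t := fun r => rfl
  have hQsucc : ∀ r, Q (r+1) = Q r ∪ D r := fun r => rfl
  have hPmono : ∀ r r', r ≤ r' → P r ⊆ P r' := by
    intro r r' h
    induction r', h using Nat.le_induction with
    | base => exact subset_rfl
    | succ n hn ih => rw [hPsucc]; exact ih.trans subset_union_left
  have hQmono : ∀ r r', r ≤ r' → Q r ⊆ Q r' := by
    intro r r' h
    induction r', h using Nat.le_induction with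
    | base => exact subset_rfl
    | succ n hn ih => rw [hQsucc]; exact ih.trans subset_union_left
  have hfamP : ∀ r r', r < r' → (⋃ t, fam r t) ⊆ P r' := by
    intro r r' h
    have h1 : (⋃ t, fam r t) ⊆ P (r+1) := by rw [hPsucc]; exact subset_union_right
    exact h1.trans (hPmono _ _ h)
  have hDkey : ∀ (x : X) (a b : ℕ), a < b → x ∈ D a → x ∈ D b → False := by
    intro x a b hab hxa hxb
    have hsubQ : D a ⊆ Q b := by
      have h1 : D a ⊆ Q (a+1) := by rw [hQsucc]; exact subset_union_right
      exact h1.trans (hQmono _ _ hab)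
    have hmem : x ∈ D b ∩ Q b := ⟨hxb, hsubQ hxa⟩
    rw [(hstg b).2.2.1] at hmem
    exact hmem
  -- block decoding
  set blk : ℕ → ℕ := fun j => Nat.findGreatest (fun r => f r ≤ j) j with hblkdef
  have hblk1 : ∀ j, f (blk j) ≤ j := fun j =>
    Nat.findGreatest_spec (P := fun r => f r ≤ j) (Nat.zero_le j)
      (le_trans (le_of_eq hf0) (Nat.zero_le j))
  have hblk2 : ∀ j, j < f (blk j + 1) := by
    intro j
    by_contra h
    push_neg at h
    have h2 : blk j + 1 ≤ j := le_trans (hfge _) h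
    have h3 := Nat.le_findGreatest (P := fun r => f r ≤ j) h2 h
    simp only [hblkdef] at h3
    omega
  have hblkuniq : ∀ r j, f r ≤ j → j < f (r+1) → blk j = r := by
    intro r j h1 h2
    have hge : r ≤ blk j := Nat.le_findGreatest (P := fun r' => f r' ≤ j) (le_trans (hfge r) h1) h1
    have hle : blk j ≤ r := by
      by_contra h
      push_neg at h
      have h3 : f (r+1) ≤ f (blk j) := hfmono.monotone h
      have h4 := hblk1 j
      omega
    omega
  set 𝒱 : ℕ → Set (Set X) := fun j => fam (blk j) (j - f (blk j)) with h𝒱def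
  refine ⟨𝒱, ?_, ?_, f, hfmono, ?_⟩
  · intro n
    have h1 := hblk1 n
    have harith : f (blk n) + (n - f (blk n)) = n := Nat.add_sub_cancel' h1
    obtain ⟨-, -, -, hFfin, hFpd, hFop, hFref, -, -, -⟩ := hstg (blk n)
    refine ⟨hFfin _, hFpd _, hFop _, ?_⟩
    intro V hV
    have h5 := hFref (n - f (blk n)) V hV
    rwa [harith] at h5
  · intro m n hmn
    rcases Nat.lt_trichotomy (blk m) (blk n) with h | h | h
    · obtain ⟨-, -, -, -, -, -, -, -, hFdisjP, -⟩ := hstg (blk n)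
      have hsub : 𝒱 m ⊆ P (blk n) := (subset_iUnion (fam (blk m)) _).trans (hfamP _ _ h)
      exact ((hFdisjP (n - f (blk n))).mono_right hsub).symm
    · obtain ⟨-, -, -, -, -, -, -, hFcross, -, -⟩ := hstg (blk m)
      have h1 := hblk1 m
      have h3 := hblk1 n
      simp only [h𝒱def]
      rw [← h] at h3 ⊢
      exact hFcross _ _ (by omega)
    · obtain ⟨-, -, -, -, -, -, -, -, hFdisjP, -⟩ := hstg (blk m)
      have hsub : 𝒱 n ⊆ P (blk m) := (subset_iUnion (fam (blk n)) _).trans (hfamP _ _ h)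
      exact (hFdisjP (m - f (blk m))).mono_right hsub
  · intro x
    have h1 : ∀ᶠ r in atTop, x ∈ ⋃₀ 𝒱H (f r) := by
      obtain ⟨K, hK⟩ := eventually_atTop.mp (h𝒱H2 x)
      exact eventually_atTop.mpr ⟨K, fun r hr => hK (f r) (le_trans hr (hfge r))⟩
    have h2 : ∀ᶠ r in atTop, x ∉ D r := by
      have hss : {r | x ∈ D r}.Subsingleton := by
        intro r₁ h₁ r₂ h₂
        by_contra hne
        rcases Nat.lt_or_ge r₁ r₂ with h | h
        · exact hDkey x r₁ r₂ h h₁ h₂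
        · exact hDkey x r₂ r₁ (lt_of_le_of_ne h (fun hh => hne hh.symm)) h₂ h₁
      have h3 := hss.finite.eventually_cofinite_notMem
      rwa [Nat.cofinite_eq_atTop] at h3
    filter_upwards [h1, h2] with r hx hxD
    obtain ⟨-, -, -, -, -, -, -, -, -, hFcov⟩ := hstg r
    obtain ⟨t, ht, hxt⟩ := hFcov x hx hxD
    have hj1 : f r ≤ f r + t := Nat.le_add_right _ _
    have hj2 : f r + t < f (r+1) := by rw [hfs]; omega
    have hblkeq : blk (f r + t) = r := hblkuniq r _ hj1 hj2
    have h𝒱eq : 𝒱 (f r + t) = fam r t := by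
      rw [h𝒱def]
      simp only [hblkeq, Nat.add_sub_cancel_left]
    have hxmem : x ∈ ⋃₀ 𝒱 (f r + t) := by rw [h𝒱eq]; exact hxt
    exact mem_biUnion ⟨hj1, hj2⟩ hxmem
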